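/- Let 0 < ε ≤ 1, let ε̄ = ε/c1 with c1 ≥ 8·c0, and let 0 < ε̲ ≤ ε̄. Let M be a matching of size i < n between A and B such that cost(M) ≤ (1 + ε/2)·cost(M_opt) and every alternating cycle Γ with respect to M satisfies adj_{ε̄,M}(Γ) ≥ 0. Then every augmenting path Π with respect to M with adj_{ε̲,M}(Π) ≤ adj*_{ε̄,M} satisfies netcost_M(Π) ≤ (1 + ε/2)·cost(M_opt) − cost(M); in particular cost(M ⊕ Π) ≤ (1 + ε/2)·cost(M_opt). -/

import Mathlib

open scoped Classical

noncomputable section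

/-- Points in `d`-dimensional Euclidean space. -/
abbrev Pt (d : ℕ) : Type := EuclideanSpace ℝ (Fin d)

/-- `M` is a matching between `A` and `B`: every edge is a pair in `A × B`, and no point
appears in more than one edge. -/
def IsMatching {d : ℕ} (A B : Finset (Pt d)) (M : Finset (Pt d × Pt d)) : Prop :=
  (∀ e ∈ M, e.1 ∈ A ∧ e.2 ∈ B) ∧
  (∀ e ∈ M, ∀ e' ∈ M, e.1 = e'.1 → e = e') ∧
  (∀ e ∈ M, ∀ e' ∈ M, e.2 = e'.2 → e = e')

/-- The cost of a matching: the sum of Euclidean lengths of its edges. -/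
def matchCost {d : ℕ} (M : Finset (Pt d × Pt d)) : ℝ :=
  ∑ e ∈ M, dist e.1 e.2

/-- A point is free with respect to `M` if it lies in no edge of `M`. -/
def IsFree {d : ℕ} (M : Finset (Pt d × Pt d)) (p : Pt d) : Prop :=
  ∀ e ∈ M, e.1 ≠ p ∧ e.2 ≠ p

/-- The edge of the complete bipartite graph joining `u` and `v`, oriented as a pair in
`A × B`. -/
def edgeOf {d : ℕ} (A : Finset (Pt d)) (u v : Pt d) : Pt d × Pt d :=
  if u ∈ A then (u, v) else (v, u)

/-- The edges of a path given by its list of vertices. -/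
def pathEdges {d : ℕ} (A : Finset (Pt d)) (L : List (Pt d)) : List (Pt d × Pt d) :=
  (L.zip L.tail).map fun uv => edgeOf A uv.1 uv.2

/-- The edges of a cycle given by its list of vertices (including the wrap-around edge). -/
def cycleEdges {d : ℕ} (A : Finset (Pt d)) (L : List (Pt d)) : List (Pt d × Pt d) :=
  pathEdges A (L ++ L.take 1)

/-- Two consecutive edges alternate: exactly one of them is a matching edge. -/
def AltRel {d : ℕ} (M : Finset (Pt d × Pt d)) (e f : Pt d × Pt d) : Prop :=
  e ∈ M ↔ f ∉ M

/-- An alternating path with respect to `M`: a simple path in the complete bipartite graph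
on `A` and `B` whose edges alternate between edges of `M` and edges not in `M`. -/
def IsAltPath {d : ℕ} (A B : Finset (Pt d)) (M : Finset (Pt d × Pt d))
    (L : List (Pt d)) : Prop :=
  2 ≤ L.length ∧ L.Nodup ∧ (∀ p ∈ L, p ∈ A ∪ B) ∧
  L.Chain' (fun u v => (u ∈ A ∧ v ∈ B) ∨ (u ∈ B ∧ v ∈ A)) ∧
  (pathEdges A L).Chain' (AltRel M)

/-- An augmenting path: an alternating path whose two endpoints are free. -/
def IsAugPath {d : ℕ} (A B : Finset (Pt d)) (M : Finset (Pt d × Pt d))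
    (L : List (Pt d)) : Prop :=
  IsAltPath A B M L ∧
  (∀ p, L.head? = some p → IsFree M p) ∧
  (∀ p, L.getLast? = some p → IsFree M p)

/-- An alternating cycle with respect to `M`: a simple cycle in the complete bipartite
graph on `A` and `B` whose edges alternate between edges of `M` and edges not in `M`
(including around the wrap-around edge). -/
def IsAltCycle {d : ℕ} (A B : Finset (Pt d)) (M : Finset (Pt d × Pt d))
    (L : List (Pt d)) : Prop :=
  4 ≤ L.length ∧ L.Nodup ∧ (∀ p ∈ L, p ∈ A ∪ B) ∧
  (L ++ L.take 1).Chain' (fun u v => (u ∈ A ∧ v ∈ B) ∨ (u ∈ B ∧ v ∈ A)) ∧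
  (cycleEdges A L).Chain' (AltRel M) ∧
  (∀ e f, (cycleEdges A L).head? = some e → (cycleEdges A L).getLast? = some f →
    AltRel M f e)

/-- The Euclidean length `‖Π‖` of a path or cycle given by its list of edges. -/
def eucLen {d : ℕ} (E : List (Pt d × Pt d)) : ℝ :=
  (E.map fun e => dist e.1 e.2).sum

/-- The net cost of an alternating path or cycle given by its list of edges:
non-matching edges count positively, matching edges negatively. -/
def netCost {d : ℕ} (M : Finset (Pt d × Pt d)) (E : List (Pt d × Pt d)) : ℝ :=
  (E.map fun e => if e ∈ M then -(dist e.1 e.2) else dist e.1 e.2).sum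

/-- The `θ`-adjusted cost `adj_{θ,M}(Π) = netcost_M(Π) + c0·θ·‖Π‖`. -/
def adjCost {d : ℕ} (c0 θ : ℝ) (M : Finset (Pt d × Pt d))
    (E : List (Pt d × Pt d)) : ℝ :=
  netCost M E + c0 * θ * eucLen E

/-- The set of `θ`-adjusted costs of augmenting paths with respect to `M`;
`adj*_{θ,M}` is its least element. -/
def adjSet {d : ℕ} (c0 θ : ℝ) (A B : Finset (Pt d)) (M : Finset (Pt d × Pt d)) : Set ℝ :=
  {x | ∃ L : List (Pt d), IsAugPath A B M L ∧ adjCost c0 θ M (pathEdges A L) = x}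


def Inc {d : ℕ} (v : Pt d) (e : Pt d × Pt d) : Prop := e.1 = v ∨ e.2 = v

lemma isFree_iff {d : ℕ} (M : Finset (Pt d × Pt d)) (p : Pt d) :
    IsFree M p ↔ ∀ e ∈ M, ¬ Inc p e := by
  unfold IsFree Inc
  constructor
  · intro h e he hi; rcases h e he with ⟨h1, h2⟩; rcases hi with h | h <;> tauto
  · intro h e he; constructor <;> intro h' <;> exact h e he (by tauto)

lemma unique_inc {d : ℕ} {A B : Finset (Pt d)} {M : Finset (Pt d × Pt d)}
    (hAB : Disjoint A B) (hM : IsMatching A B M) {e e' : Pt d × Pt d} {v : Pt d}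
    (he : e ∈ M) (he' : e' ∈ M) (h1 : Inc v e) (h2 : Inc v e') : e = e' := by
  have c1 := hM.1 e he
  have c2 := hM.1 e' he'
  have hd := Finset.disjoint_left.mp hAB
  rcases h1 with h1 | h1 <;> rcases h2 with h2 | h2
  · exact hM.2.1 e he e' he' (h1.trans h2.symm)
  · exact absurd (h1 ▸ c1.1) (fun hh => hd hh (h2 ▸ c2.2))
  · exact absurd (h2 ▸ c2.1) (fun hh => hd hh (h1 ▸ c1.2))
  · exact hM.2.2 e he e' he' (h1.trans h2.symm)

/-- Other-endpoint helper. -/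
lemma other_pt {d : ℕ} {A B : Finset (Pt d)} (hAB : Disjoint A B)
    {e : Pt d × Pt d} {u : Pt d} (he1 : e.1 ∈ A) (he2 : e.2 ∈ B) (hu : Inc u e) :
    ∃ w, Inc w e ∧ u ≠ w ∧ ((u ∈ A ∧ w ∈ B) ∨ (u ∈ B ∧ w ∈ A)) ∧
      edgeOf A u w = e ∧ edgeOf A w u = e ∧ (∀ x, Inc x e → x = u ∨ x = w) := by
  have hd := Finset.disjoint_left.mp hAB
  rcases hu with hu | hu
  · refine ⟨e.2, Or.inr rfl, ?_, ?_, ?_, ?_, ?_⟩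
    · intro h; exact hd (hu ▸ he1) (h ▸ he2)
    · exact Or.inl ⟨hu ▸ he1, he2⟩
    · unfold edgeOf; rw [if_pos (hu ▸ he1)]; rw [← hu]
    · unfold edgeOf; rw [if_neg (fun h => hd h he2)]; rw [← hu]
    · intro x hx; rcases hx with hx | hx
      · exact Or.inl (hx ▸ hu.symm ▸ rfl)
      · exact Or.inr hx.symm
  · refine ⟨e.1, Or.inl rfl, ?_, ?_, ?_, ?_, ?_⟩
    · intro h; exact hd (h ▸ he1) (hu ▸ he2)
    · exact Or.inr ⟨hu ▸ he2, he1⟩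
    · unfold edgeOf; rw [if_neg (fun h => hd h (hu ▸ he2))]; rw [← hu]
    · unfold edgeOf; rw [if_pos he1]; rw [← hu]
    · intro x hx; rcases hx with hx | hx
      · exact Or.inr hx.symm
      · exact Or.inl (hx ▸ hu.symm ▸ rfl)

lemma edgeOf_comp {d : ℕ} (A : Finset (Pt d)) (u v : Pt d) :
    ((edgeOf A u v).1 = u ∧ (edgeOf A u v).2 = v) ∨
    ((edgeOf A u v).1 = v ∧ (edgeOf A u v).2 = u) := by
  unfold edgeOf; split <;> simp

lemma pathEdges_nil {d : ℕ} (A : Finset (Pt d)) : pathEdges A ([] : List (Pt d)) = [] := rfl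

lemma pathEdges_single {d : ℕ} (A : Finset (Pt d)) (x : Pt d) : pathEdges A [x] = [] := rfl

lemma pathEdges_cons₂ {d : ℕ} (A : Finset (Pt d)) (u w : Pt d) (t : List (Pt d)) :
    pathEdges A (u :: w :: t) = edgeOf A u w :: pathEdges A (w :: t) := by
  simp [pathEdges]

lemma mem_pathEdges_endpoints {d : ℕ} {A : Finset (Pt d)} :
    ∀ {L : List (Pt d)} {e : Pt d × Pt d}, e ∈ pathEdges A L → e.1 ∈ L ∧ e.2 ∈ L := by
  intro L
  induction L with
  | nil => intro e he; simp [pathEdges_nil] at he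
  | cons x t ih =>
    intro e he
    match t with
    | [] => simp [pathEdges_single] at he
    | y :: t' =>
      rw [pathEdges_cons₂] at he
      rcases List.mem_cons.mp he with he | he
      · rcases edgeOf_comp A x y with ⟨h1, h2⟩ | ⟨h1, h2⟩ <;> subst he <;>
          simp [h1, h2]
      · have := ih he
        exact ⟨List.mem_cons_of_mem _ this.1, List.mem_cons_of_mem _ this.2⟩

lemma mem_of_inc_pathEdges {d : ℕ} {A : Finset (Pt d)} {L : List (Pt d)}
    {e : Pt d × Pt d} {v : Pt d} (he : e ∈ pathEdges A L) (hv : Inc v e) : v ∈ L := by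
  have := mem_pathEdges_endpoints he
  rcases hv with hv | hv <;> [exact hv ▸ this.1; exact hv ▸ this.2]

lemma pathEdges_concat {d : ℕ} (A : Finset (Pt d)) :
    ∀ (L : List (Pt d)) (w z : Pt d), L.getLast? = some w →
      pathEdges A (L ++ [z]) = pathEdges A L ++ [edgeOf A w z] := by
  intro L
  induction L with
  | nil => intro w z h; simp at h
  | cons x t ih =>
    intro w z h
    match t with
    | [] =>
      simp at h; subst h
      simp [pathEdges_single, pathEdges_cons₂]
    | y :: t' =>
      rw [List.getLast?_cons_cons] at h
      have := ih w z h
      rw [List.cons_append] at this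
      simp only [List.cons_append, pathEdges_cons₂]
      rw [this]

lemma pathEdges_nodup {d : ℕ} {A : Finset (Pt d)} :
    ∀ {L : List (Pt d)}, L.Nodup → (pathEdges A L).Nodup := by
  intro L
  induction L with
  | nil => intro _; simp [pathEdges_nil]
  | cons x t ih =>
    intro h
    match t with
    | [] => simp [pathEdges_single]
    | y :: t' =>
      rw [pathEdges_cons₂]
      refine List.Nodup.cons ?_ (ih (List.nodup_cons.mp h).2)
      intro hmem
      have hx : x ∉ y :: t' := (List.nodup_cons.mp h).1
      have := mem_pathEdges_endpoints hmem
      rcases edgeOf_comp A x y with ⟨h1, _⟩ | ⟨_, h2⟩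
      · exact hx (h1 ▸ this.1)
      · exact hx (h2 ▸ this.2)



/-- The per-edge adjusted-cost weight. -/
def Fw {d : ℕ} (c0 θ : ℝ) (M : Finset (Pt d × Pt d)) (e : Pt d × Pt d) : ℝ :=
  (if e ∈ M then -(dist e.1 e.2) else dist e.1 e.2) + c0 * θ * dist e.1 e.2

lemma adjCost_eq_sum {d : ℕ} (c0 θ : ℝ) (M : Finset (Pt d × Pt d)) :
    ∀ E : List (Pt d × Pt d), adjCost c0 θ M E = (E.map (Fw c0 θ M)).sum := by
  intro E
  induction E with
  | nil => simp [adjCost, netCost, eucLen]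
  | cons e t ih =>
    simp only [adjCost, netCost, eucLen, List.map_cons, List.sum_cons] at *
    unfold Fw at ih ⊢
    rw [mul_add]
    linarith

lemma adjCost_eq_finset_sum {d : ℕ} (c0 θ : ℝ) (M : Finset (Pt d × Pt d))
    (E : List (Pt d × Pt d)) (hE : E.Nodup) :
    adjCost c0 θ M E = ∑ e ∈ E.toFinset, Fw c0 θ M e := by
  rw [adjCost_eq_sum, List.sum_toFinset _ hE]

lemma eucLen_nonneg {d : ℕ} (E : List (Pt d × Pt d)) : 0 ≤ eucLen E := by
  apply List.sum_nonneg; intro x hx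
  simp only [List.mem_map] at hx
  obtain ⟨e, _, rfl⟩ := hx; exact dist_nonneg

lemma netCost_le_adjCost {d : ℕ} {c0 θ : ℝ} (hc : 0 ≤ c0 * θ) (M : Finset (Pt d × Pt d))
    (E : List (Pt d × Pt d)) : netCost M E ≤ adjCost c0 θ M E := by
  unfold adjCost; nlinarith [eucLen_nonneg E]

lemma netCost_eq_finset {d : ℕ} (M : Finset (Pt d × Pt d)) (E : List (Pt d × Pt d))
    (hE : E.Nodup) :
    netCost M E = ∑ e ∈ E.toFinset \ M, dist e.1 e.2 - ∑ e ∈ E.toFinset ∩ M, dist e.1 e.2 := by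
  unfold netCost
  rw [← List.sum_toFinset _ hE]
  rw [← Finset.sum_filter_add_sum_filter_not E.toFinset (· ∈ M)]
  rw [Finset.filter_mem_eq_inter]
  have h1 : ∑ e ∈ E.toFinset ∩ M, (if e ∈ M then -(dist e.1 e.2) else dist e.1 e.2)
      = -∑ e ∈ E.toFinset ∩ M, dist e.1 e.2 := by
    rw [← Finset.sum_neg_distrib]
    apply Finset.sum_congr rfl; intro e he
    rw [if_pos (Finset.mem_inter.mp he).2]
  have h2 : ∑ e ∈ E.toFinset.filter (¬ · ∈ M), (if e ∈ M then -(dist e.1 e.2) else dist e.1 e.2)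
      = ∑ e ∈ E.toFinset \ M, dist e.1 e.2 := by
    rw [show E.toFinset.filter (¬ · ∈ M) = E.toFinset \ M by
      ext e; simp [Finset.mem_sdiff, Finset.mem_filter]]
    apply Finset.sum_congr rfl; intro e he
    rw [if_neg (Finset.mem_sdiff.mp he).2]
  rw [h1, h2]; ring

lemma exists_le_of_sum_le {c : ℝ} (hc : 0 ≤ c) :
    ∀ (l : List ℝ), l ≠ [] → l.sum ≤ c → ∃ x ∈ l, x ≤ c := by
  intro l
  induction l with
  | nil => tauto
  | cons x t ih =>
    intro _ hsum
    by_cases hx : x ≤ c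
    · exact ⟨x, List.mem_cons_self, hx⟩
    · push_neg at hx
      have ht : t ≠ [] := by
        rintro rfl; simp at hsum; linarith
      have : t.sum ≤ c := by
        simp only [List.sum_cons] at hsum
        by_contra h; push_neg at h
        have : 0 ≤ t.sum := le_trans hc h.le
        linarith
      obtain ⟨y, hy, hyc⟩ := ih ht this
      exact ⟨y, List.mem_cons_of_mem _ hy, hyc⟩

lemma cover_snd {d : ℕ} {A B : Finset (Pt d)} {N : Finset (Pt d × Pt d)}
    (hN : IsMatching A B N) (hcard : N.card = B.card) : ∀ b ∈ B, ∃ e ∈ N, e.2 = b := by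
  have hinj : Set.InjOn Prod.snd (N : Set (Pt d × Pt d)) := by
    intro e he e' he' h; exact hN.2.2 e he e' he' h
  have hsub : N.image Prod.snd ⊆ B := by
    intro b hb; obtain ⟨e, he, rfl⟩ := Finset.mem_image.mp hb; exact (hN.1 e he).2
  have hcard' : (N.image Prod.snd).card = N.card := Finset.card_image_of_injOn hinj
  have : N.image Prod.snd = B := Finset.eq_of_subset_of_card_le hsub (by omega)
  intro b hb
  rw [← this] at hb
  obtain ⟨e, he, h2⟩ := Finset.mem_image.mp hb
  exact ⟨e, he, h2⟩

lemma cover_fst {d : ℕ} {A B : Finset (Pt d)} {N : Finset (Pt d × Pt d)}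
    (hN : IsMatching A B N) (hcard : N.card = A.card) : ∀ a ∈ A, ∃ e ∈ N, e.1 = a := by
  have hinj : Set.InjOn Prod.fst (N : Set (Pt d × Pt d)) := by
    intro e he e' he' h; exact hN.2.1 e he e' he' h
  have hsub : N.image Prod.fst ⊆ A := by
    intro b hb; obtain ⟨e, he, rfl⟩ := Finset.mem_image.mp hb; exact (hN.1 e he).1
  have hcard' : (N.image Prod.fst).card = N.card := Finset.card_image_of_injOn hinj
  have : N.image Prod.fst = A := Finset.eq_of_subset_of_card_le hsub (by omega)
  intro a ha
  rw [← this] at ha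
  obtain ⟨e, he, h2⟩ := Finset.mem_image.mp ha
  exact ⟨e, he, h2⟩

/-- Symmetric-difference membership predicate. -/
def SDm {d : ℕ} (M N : Finset (Pt d × Pt d)) (e : Pt d × Pt d) : Prop :=
  (e ∈ M ∨ e ∈ N) ∧ ¬(e ∈ M ∧ e ∈ N)

lemma pathL {d : ℕ} {A B : Finset (Pt d)} {M N : Finset (Pt d × Pt d)}
    (hAB : Disjoint A B) (hM : IsMatching A B M) (hN : IsMatching A B N)
    (hNA : ∀ a ∈ A, ∃ e ∈ N, e.1 = a) (hNB : ∀ b ∈ B, ∃ e ∈ N, e.2 = b) :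
    ∀ (k : ℕ) (G : Finset (Pt d × Pt d)) (u : Pt d), G.card ≤ k →
    (∀ e ∈ G, e ∈ M ∨ e ∈ N) →
    (∀ e ∈ G, e ∈ M → e ∈ N → False) →
    (∀ v e, (∃ g ∈ G, Inc v g) → SDm M N e → Inc v e → (e ∈ G ∨ (v = u ∧ e ∈ M))) →
    (∀ e ∈ M, Inc u e → e ∉ G) →
    (∃ g ∈ G, g ∈ N ∧ Inc u g) →
    ∃ L : List (Pt d),
      L.head? = some u ∧ 2 ≤ L.length ∧ L.Nodup ∧
      L.Chain' (fun x y => (x ∈ A ∧ y ∈ B) ∨ (x ∈ B ∧ y ∈ A)) ∧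
      (pathEdges A L).Chain' (AltRel M) ∧
      (∀ p, L.getLast? = some p → IsFree M p) ∧
      (pathEdges A L).Nodup ∧
      (∀ e ∈ pathEdges A L, e ∈ G) ∧
      (∀ e, (pathEdges A L).head? = some e → e ∉ M) ∧
      (∀ p ∈ L, ∃ e ∈ pathEdges A L, Inc p e) ∧
      (∀ v e, v ∈ L → e ∈ G → Inc v e → e ∈ pathEdges A L) := by
  intro k
  induction k with
  | zero =>
    intro G u hk _ _ _ _ hg
    obtain ⟨g, hgG, _⟩ := hg
    have : G = ∅ := Finset.card_eq_zero.mp (le_antisymm hk (Nat.zero_le _))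
    subst this; simp at hgG
  | succ k ih =>
    intro G u hk hG hdisj hInv hnoM hg
    obtain ⟨g, hgG, hgN, hgu⟩ := hg
    have hgAB := hN.1 g hgN
    obtain ⟨w, hwinc, huw, hbip_uw, heq_uw, heq_wu, hcov_g⟩ := other_pt hAB hgAB.1 hgAB.2 hgu
    have hgnM : g ∉ M := fun h => hdisj g hgG h hgN
    by_cases hwM : ∃ m ∈ G, m ∈ M ∧ Inc w m
    · -- recursive case
      obtain ⟨m, hmG, hmM, hwm⟩ := hwM
      have hmAB := hM.1 m hmM
      obtain ⟨u', hu'inc, hwu', hbip_wu', heq_wu', heq_u'w, hcov_m⟩ :=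
        other_pt hAB hmAB.1 hmAB.2 hwm
      have hgm : g ≠ m := fun h => hgnM (h ▸ hmM)
      have hmnN : m ∉ N := fun h => hdisj m hmG hmM h
      have hu_not_m : ¬ Inc u m := fun h => (hnoM m hmM h) hmG
      have hu'u : u' ≠ u := fun h => hu_not_m (h ▸ hu'inc)
      have huonly : ∀ e ∈ G, Inc u e → e = g := by
        intro e heG hinc
        rcases hG e heG with heM | heN
        · exact absurd heG (hnoM e heM hinc)
        · exact unique_inc hAB hN heN hgN hinc hgu
      have hwonly : ∀ e ∈ G, Inc w e → e = g ∨ e = m := by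
        intro e heG hinc
        rcases hG e heG with heM | heN
        · exact Or.inr (unique_inc hAB hM heM hmM hinc hwm)
        · exact Or.inl (unique_inc hAB hN heN hgN hinc hwinc)
      set G' := G \ ({g, m} : Finset (Pt d × Pt d)) with hG'def
      have hG'sub : G' ⊆ G := Finset.sdiff_subset
      have hgm_sub : ({g, m} : Finset (Pt d × Pt d)) ⊆ G := by
        intro x hx; rcases Finset.mem_insert.mp hx with rfl | hx
        · exact hgG
        · rw [Finset.mem_singleton] at hx; exact hx ▸ hmG
      have hcard' : G'.card ≤ k := by
        have hss : G' ⊂ G := Finset.sdiff_ssubset hgm_sub ⟨g, Finset.mem_insert_self _ _⟩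
        have := Finset.card_lt_card hss; omega
      have hu_notinc' : ¬ ∃ g' ∈ G', Inc u g' := by
        rintro ⟨g', hg'G', hincu⟩
        have := huonly g' (hG'sub hg'G') hincu
        subst this; simp [hG'def] at hg'G'
      have hw_notinc' : ¬ ∃ g' ∈ G', Inc w g' := by
        rintro ⟨g', hg'G', hincw⟩
        rcases hwonly g' (hG'sub hg'G') hincw with rfl | rfl <;> simp [hG'def] at hg'G'
      have hu'A : u' ∈ A ∪ B := by
        rcases hbip_wu' with ⟨_, h⟩ | ⟨_, h⟩ <;> simp [h]
      have hf : ∃ f, f ∈ N ∧ Inc u' f := by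
        rcases Finset.mem_union.mp hu'A with h | h
        · obtain ⟨f, hfN, hf1⟩ := hNA u' h; exact ⟨f, hfN, Or.inl hf1⟩
        · obtain ⟨f, hfN, hf2⟩ := hNB u' h; exact ⟨f, hfN, Or.inr hf2⟩
      obtain ⟨f, hfN, hfu'⟩ := hf
      have hfnM : f ∉ M := by
        intro h
        have : f = m := unique_inc hAB hM h hmM hfu' hu'inc
        exact hmnN (this ▸ hfN)
      have hfSD : SDm M N f := ⟨Or.inr hfN, fun h => hfnM h.1⟩
      have hfG : f ∈ G := by
        rcases hInv u' f ⟨m, hmG, hu'inc⟩ hfSD hfu' with h | ⟨_, h2⟩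
        · exact h
        · exact absurd h2 hfnM
      have hfg : f ≠ g := by
        intro h; subst h
        rcases hcov_g u' hfu' with h | h
        · exact hu'u h
        · exact hwu' h.symm
      have hfm : f ≠ m := fun h => hmnN (h ▸ hfN)
      have hfG' : f ∈ G' := by simp [hG'def, hfg, hfm, hfG]
      have hG'1 : ∀ e ∈ G', e ∈ M ∨ e ∈ N := fun e he => hG e (hG'sub he)
      have hdisj' : ∀ e ∈ G', e ∈ M → e ∈ N → False := fun e he => hdisj e (hG'sub he)
      have hInv' : ∀ v e, (∃ g' ∈ G', Inc v g') → SDm M N e → Inc v e →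
          (e ∈ G' ∨ (v = u' ∧ e ∈ M)) := by
        rintro v e ⟨g', hg'G', hvg'⟩ heSD hince
        rcases hInv v e ⟨g', hG'sub hg'G', hvg'⟩ heSD hince with hEG | ⟨rfl, heM⟩
        · by_cases heg : e = g
          · subst heg
            rcases hcov_g v hince with rfl | rfl
            · exact absurd ⟨g', hg'G', hvg'⟩ hu_notinc'
            · exact absurd ⟨g', hg'G', hvg'⟩ hw_notinc'
          · by_cases hem : e = m
            · subst hem
              rcases hcov_m v hince with rfl | rfl
              · exact absurd ⟨g', hg'G', hvg'⟩ hw_notinc'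
              · exact Or.inr ⟨rfl, hmM⟩
            · exact Or.inl (by simp [hG'def, heg, hem, hEG])
        · exact absurd ⟨g', hg'G', hvg'⟩ hu_notinc'
      have hnoM' : ∀ e ∈ M, Inc u' e → e ∉ G' := by
        intro e heM hince hinG'
        have : e = m := unique_inc hAB hM heM hmM hince hu'inc
        subst this; simp [hG'def] at hinG'
      obtain ⟨L', hhead', hlen', hnodup', hbip', halt', hlastfree', henodup', hesub',
        hefirst', hincid', hclosed'⟩ :=
        ih G' u' hcard' hG'1 hdisj' hInv' hnoM' ⟨f, hfG', hfN, hfu'⟩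
      obtain ⟨t, rfl⟩ : ∃ t, L' = u' :: t := by
        cases L' with
        | nil => simp at hhead'
        | cons a t => simp at hhead'; exact ⟨t, by rw [hhead']⟩
      have hvertG' : ∀ p ∈ u' :: t, ∃ g' ∈ G', Inc p g' := by
        intro p hp; obtain ⟨e, he, hpe⟩ := hincid' p hp; exact ⟨e, hesub' e he, hpe⟩
      have hu_notL' : u ∉ u' :: t := fun h => hu_notinc' (hvertG' u h)
      have hw_notL' : w ∉ u' :: t := fun h => hw_notinc' (hvertG' w h)
      have hPE : pathEdges A (u :: w :: u' :: t) = g :: m :: pathEdges A (u' :: t) := by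
        rw [pathEdges_cons₂, pathEdges_cons₂, heq_uw, heq_wu']
      have hgE' : g ∉ pathEdges A (u' :: t) := by
        intro h; have := hesub' g h; simp [hG'def] at this
      have hmE' : m ∉ pathEdges A (u' :: t) := by
        intro h; have := hesub' m h; simp [hG'def] at this
      refine ⟨u :: w :: u' :: t, rfl, by simp, ?_, ?_, ?_, ?_, ?_, ?_, ?_, ?_, ?_⟩
      · -- Nodup
        refine List.nodup_cons.mpr ⟨?_, List.nodup_cons.mpr ⟨hw_notL', hnodup'⟩⟩
        intro h
        rcases List.mem_cons.mp h with h | h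
        · exact huw h
        · exact hu_notL' h
      · -- bipartite chain
        exact List.isChain_cons_cons.mpr ⟨hbip_uw, List.isChain_cons_cons.mpr ⟨hbip_wu', hbip'⟩⟩
      · -- alternation chain
        rw [hPE]
        refine List.isChain_cons_cons.mpr ⟨by simp [AltRel, hgnM, hmM], ?_⟩
        refine List.isChain_cons.mpr ⟨?_, halt'⟩
        intro y hy
        have := hefirst' y hy
        simp [AltRel, hmM, this]
      · -- last free
        intro p hp
        rw [List.getLast?_cons_cons, List.getLast?_cons_cons] at hp
        exact hlastfree' p hp
      · -- edges nodup
        rw [hPE]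
        refine List.nodup_cons.mpr ⟨?_, List.nodup_cons.mpr ⟨hmE', henodup'⟩⟩
        intro h
        rcases List.mem_cons.mp h with h | h
        · exact hgm h
        · exact hgE' h
      · -- edges in G
        rw [hPE]
        intro e he
        rcases List.mem_cons.mp he with rfl | he
        · exact hgG
        · rcases List.mem_cons.mp he with rfl | he
          · exact hmG
          · exact hG'sub (hesub' e he)
      · -- first edge not in M
        rw [hPE]; intro e he; simp at he; exact he ▸ hgnM
      · -- incidence
        intro p hp
        rw [hPE]
        rcases List.mem_cons.mp hp with rfl | hp
        · exact ⟨g, List.mem_cons_self, hgu⟩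
        · rcases List.mem_cons.mp hp with rfl | hp
          · exact ⟨g, List.mem_cons_self, hwinc⟩
          · obtain ⟨e, he, hpe⟩ := hincid' p hp
            exact ⟨e, List.mem_cons_of_mem _ (List.mem_cons_of_mem _ he), hpe⟩
      · -- closed
        intro v e hv heG hince
        rw [hPE]
        by_cases heg : e = g
        · subst heg; exact List.mem_cons_self
        · by_cases hem : e = m
          · subst hem; exact List.mem_cons_of_mem _ (List.mem_cons_self)
          · have heG' : e ∈ G' := by simp [hG'def, heg, hem, heG]
            rcases List.mem_cons.mp hv with rfl | hv
            · exact absurd ⟨e, heG', hince⟩ hu_notinc'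
            · rcases List.mem_cons.mp hv with rfl | hv
              · exact absurd ⟨e, heG', hince⟩ hw_notinc'
              · exact List.mem_cons_of_mem _ (List.mem_cons_of_mem _
                  (hclosed' v e hv heG' hince))
    · -- base case : w has no matching edge in G, hence is free
      push_neg at hwM
      have hwfree : IsFree M w := by
        rw [isFree_iff]
        intro e heM hinc
        have heSD : SDm M N e := by
          refine ⟨Or.inl heM, ?_⟩
          rintro ⟨h1, h2⟩
          exact hgnM ((unique_inc hAB hN h2 hgN hinc hwinc) ▸ h1)
        rcases hInv w e ⟨g, hgG, hwinc⟩ heSD hinc with hEG | ⟨hwu, _⟩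
        · exact hwM e hEG heM hinc
        · exact huw hwu.symm
      have hPE : pathEdges A [u, w] = [g] := by
        rw [pathEdges_cons₂, pathEdges_single, heq_uw]
      refine ⟨[u, w], rfl, by simp, ?_, ?_, ?_, ?_, ?_, ?_, ?_, ?_, ?_⟩
      · simp [huw]
      · exact List.isChain_pair.mpr hbip_uw
      · rw [hPE]; exact List.isChain_singleton _
      · intro p hp; simp at hp; exact hp ▸ hwfree
      · rw [hPE]; simp
      · rw [hPE]; intro e he; simp at he; exact he ▸ hgG
      · rw [hPE]; intro e he; simp at he; exact he ▸ hgnM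
      · intro p hp
        rw [hPE]
        rcases List.mem_cons.mp hp with rfl | hp
        · exact ⟨g, List.mem_cons_self, hgu⟩
        · simp at hp; exact ⟨g, List.mem_cons_self, hp ▸ hwinc⟩
      · intro v e hv heG hince
        rw [hPE]
        rcases List.mem_cons.mp hv with rfl | hv
        · rcases hG e heG with heM | heN
          · exact absurd heG (hnoM e heM hince)
          · have : e = g := unique_inc hAB hN heN hgN hince hgu
            simp [this]
        · simp at hv; subst hv
          rcases hG e heG with heM | heN
          · exact absurd hince ((isFree_iff M _).mp hwfree e heM)
          · have : e = g := unique_inc hAB hN heN hgN hince hwinc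
            simp [this]

lemma cycL {d : ℕ} {A B : Finset (Pt d)} {M N : Finset (Pt d × Pt d)}
    (hAB : Disjoint A B) (hM : IsMatching A B M) (hN : IsMatching A B N)
    (hNA : ∀ a ∈ A, ∃ e ∈ N, e.1 = a) (hNB : ∀ b ∈ B, ∃ e ∈ N, e.2 = b) :
    ∀ (k : ℕ) (G : Finset (Pt d × Pt d)) (b z : Pt d), G.card ≤ k →
    (∀ e ∈ G, e ∈ M ∨ e ∈ N) →
    (∀ e ∈ G, e ∈ M → e ∈ N → False) →
    (∀ v e, (∃ g ∈ G, Inc v g) → SDm M N e → Inc v e →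
      (e ∈ G ∨ ((v = b ∨ v = z) ∧ e ∈ M))) →
    (∃ mb, mb ∈ M ∧ mb ∉ N ∧ Inc b mb ∧ mb ∉ G) →
    (∃ mz, mz ∈ M ∧ Inc z mz ∧ mz ∉ G) →
    b ≠ z →
    (∀ v, (∃ g ∈ G, Inc v g) → ¬ IsFree M v) →
    (∃ f ∈ G, f ∈ N ∧ Inc b f) →
    ∃ (L : List (Pt d)) (fk : Pt d × Pt d),
      L.head? = some b ∧ L.Nodup ∧ z ∉ L ∧
      L.Chain' (fun x y => (x ∈ A ∧ y ∈ B) ∨ (x ∈ B ∧ y ∈ A)) ∧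
      (pathEdges A L).Chain' (AltRel M) ∧
      (pathEdges A L).Nodup ∧
      (∀ e ∈ pathEdges A L, e ∈ G) ∧
      (∀ e, (pathEdges A L).head? = some e → e ∉ M) ∧
      (∀ e, (pathEdges A L).getLast? = some e → e ∈ M) ∧
      fk ∈ G ∧ fk ∈ N ∧ Inc z fk ∧ fk ∉ pathEdges A L ∧
      (∃ w, L.getLast? = some w ∧ Inc w fk ∧ (∀ x, Inc x fk → x = w ∨ x = z)) ∧
      (∀ p ∈ L, ∃ e, (e ∈ pathEdges A L ∨ e = fk) ∧ Inc p e) ∧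
      (∀ v e, v ∈ L → e ∈ G → Inc v e → (e ∈ pathEdges A L ∨ e = fk)) := by
  intro k
  induction k with
  | zero =>
    intro G b z hk _ _ _ _ _ _ _ hgb
    obtain ⟨f, hfG, _⟩ := hgb
    have : G = ∅ := Finset.card_eq_zero.mp (le_antisymm hk (Nat.zero_le _))
    subst this; simp at hfG
  | succ k ih =>
    intro G b z hk hG hdisj hInv hbM hzM hbz hnonfree hgb
    obtain ⟨mb, hmbM, hmbnN, hmbinc, hmbnG⟩ := hbM
    obtain ⟨mz, hmzM, hmzinc, hmznG⟩ := hzM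
    obtain ⟨f, hfG, hfN, hfb⟩ := hgb
    have hfAB := hN.1 f hfN
    obtain ⟨a, hainc, hba, hbip_ba, heq_ba, heq_ab, hcov_f⟩ := other_pt hAB hfAB.1 hfAB.2 hfb
    have hfnM : f ∉ M := fun h => hdisj f hfG h hfN
    have honly_b : ∀ e ∈ G, Inc b e → e = f := by
      intro e heG hinc
      rcases hG e heG with heM | heN
      · exact absurd ((unique_inc hAB hM heM hmbM hinc hmbinc) ▸ heG) hmbnG
      · exact unique_inc hAB hN heN hfN hinc hfb
    by_cases haz : a = z
    · -- base case : cycle closes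
      subst haz
      refine ⟨[b], f, rfl, by simp, ?_, ?_, ?_, ?_, ?_, ?_, ?_, hfG, hfN, hainc, ?_, ?_, ?_, ?_⟩
      · simp; exact fun h => hbz h.symm
      · simp [List.Chain']
      · simp [pathEdges_single, List.Chain']
      · simp [pathEdges_single]
      · simp [pathEdges_single]
      · simp [pathEdges_single]
      · simp [pathEdges_single]
      · simp [pathEdges_single]
      · exact ⟨b, rfl, hfb, hcov_f⟩
      · intro p hp; simp at hp; subst hp; exact ⟨f, Or.inr rfl, hfb⟩
      · intro v e hv heG hince
        simp at hv; subst hv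
        exact Or.inr (honly_b e heG hince)
    · -- recursive case
      have hanonfree : ¬ IsFree M a := hnonfree a ⟨f, hfG, hainc⟩
      rw [isFree_iff] at hanonfree
      push_neg at hanonfree
      obtain ⟨m', hm'M, hm'inc⟩ := hanonfree
      have hm'nN : m' ∉ N := by
        intro h
        have : m' = f := unique_inc hAB hN h hfN hm'inc hainc
        exact hfnM (this ▸ hm'M)
      have hm'SD : SDm M N m' := ⟨Or.inl hm'M, fun h => hm'nN h.2⟩
      have hm'G : m' ∈ G := by
        rcases hInv a m' ⟨f, hfG, hainc⟩ hm'SD hm'inc with h | ⟨hab, _⟩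
        · exact h
        · rcases hab with h | h
          · exact absurd h.symm hba
          · exact absurd h haz
      have hm'AB := hM.1 m' hm'M
      obtain ⟨b', hb'inc, hab', hbip_ab', heq_ab', heq_b'a, hcov_m'⟩ :=
        other_pt hAB hm'AB.1 hm'AB.2 hm'inc
      have hb'b : b' ≠ b := by
        intro h; subst h
        exact hmbnG ((unique_inc hAB hM hm'M hmbM hb'inc hmbinc) ▸ hm'G)
      have hb'z : b' ≠ z := by
        intro h; subst h
        exact hmznG ((unique_inc hAB hM hm'M hmzM hb'inc hmzinc) ▸ hm'G)
      have hfm' : f ≠ m' := fun h => hfnM (h ▸ hm'M)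
      have honly_a : ∀ e ∈ G, Inc a e → e = f ∨ e = m' := by
        intro e heG hinc
        rcases hG e heG with heM | heN
        · exact Or.inr (unique_inc hAB hM heM hm'M hinc hm'inc)
        · exact Or.inl (unique_inc hAB hN heN hfN hinc hainc)
      set G'' := G \ ({f, m'} : Finset (Pt d × Pt d)) with hG''def
      have hG''sub : G'' ⊆ G := Finset.sdiff_subset
      have hfm'_sub : ({f, m'} : Finset (Pt d × Pt d)) ⊆ G := by
        intro x hx; rcases Finset.mem_insert.mp hx with rfl | hx
        · exact hfG
        · rw [Finset.mem_singleton] at hx; exact hx ▸ hm'G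
      have hcard'' : G''.card ≤ k := by
        have hss : G'' ⊂ G := Finset.sdiff_ssubset hfm'_sub ⟨f, Finset.mem_insert_self _ _⟩
        have := Finset.card_lt_card hss; omega
      have hb_notinc : ¬ ∃ g' ∈ G'', Inc b g' := by
        rintro ⟨g', hg', hincb⟩
        have := honly_b g' (hG''sub hg') hincb
        subst this; simp [hG''def] at hg'
      have ha_notinc : ¬ ∃ g' ∈ G'', Inc a g' := by
        rintro ⟨g', hg', hinca⟩
        rcases honly_a g' (hG''sub hg') hinca with rfl | rfl <;> simp [hG''def] at hg'
      have hb'A : b' ∈ A ∪ B := by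
        rcases hbip_ab' with ⟨_, h⟩ | ⟨_, h⟩ <;> simp [h]
      have hf' : ∃ f', f' ∈ N ∧ Inc b' f' := by
        rcases Finset.mem_union.mp hb'A with h | h
        · obtain ⟨f', hf'N, h1⟩ := hNA b' h; exact ⟨f', hf'N, Or.inl h1⟩
        · obtain ⟨f', hf'N, h2⟩ := hNB b' h; exact ⟨f', hf'N, Or.inr h2⟩
      obtain ⟨f', hf'N, hf'b'⟩ := hf'
      have hf'nM : f' ∉ M := by
        intro h
        have : f' = m' := unique_inc hAB hM h hm'M hf'b' hb'inc
        exact hm'nN (this ▸ hf'N)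
      have hf'G : f' ∈ G := by
        rcases hInv b' f' ⟨m', hm'G, hb'inc⟩ ⟨Or.inr hf'N, fun h => hf'nM h.1⟩ hf'b'
          with h | ⟨hb'bz, h2⟩
        · exact h
        · exact absurd h2 hf'nM
      have hf'f : f' ≠ f := by
        intro h; subst h
        rcases hcov_f b' hf'b' with h | h
        · exact hb'b h
        · exact hab' h.symm
      have hf'm' : f' ≠ m' := fun h => hm'nN (h ▸ hf'N)
      have hf'G'' : f' ∈ G'' := by simp [hG''def, hf'f, hf'm', hf'G]
      have hInv'' : ∀ v e, (∃ g' ∈ G'', Inc v g') → SDm M N e → Inc v e →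
          (e ∈ G'' ∨ ((v = b' ∨ v = z) ∧ e ∈ M)) := by
        rintro v e ⟨g', hg'G'', hvg'⟩ heSD hince
        rcases hInv v e ⟨g', hG''sub hg'G'', hvg'⟩ heSD hince with hEG | ⟨hvbz, heM⟩
        · by_cases hef : e = f
          · subst hef
            rcases hcov_f v hince with rfl | rfl
            · exact absurd ⟨g', hg'G'', hvg'⟩ hb_notinc
            · exact absurd ⟨g', hg'G'', hvg'⟩ ha_notinc
          · by_cases hem : e = m'
            · subst hem
              rcases hcov_m' v hince with rfl | rfl
              · exact absurd ⟨g', hg'G'', hvg'⟩ ha_notinc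
              · exact Or.inr ⟨Or.inl rfl, hm'M⟩
            · exact Or.inl (by simp [hG''def, hef, hem, hEG])
        · rcases hvbz with rfl | rfl
          · exact absurd ⟨g', hg'G'', hvg'⟩ hb_notinc
          · exact Or.inr ⟨Or.inr rfl, heM⟩
      obtain ⟨L', fk, hhead', hnodup', hznL', hbip', halt', henodup', hesub', hefirst',
        helast', hfkG'', hfkN, hfkz, hfknE', ⟨w, hw, hwfk, hcovfk⟩, hincid', hclosed'⟩ :=
        ih G'' b' z hcard''
          (fun e he => hG e (hG''sub he))
          (fun e he => hdisj e (hG''sub he))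
          hInv''
          ⟨m', hm'M, hm'nN, hb'inc, by simp [hG''def]⟩
          ⟨mz, hmzM, hmzinc, fun h => hmznG (hG''sub h)⟩
          hb'z
          (fun v hv => hnonfree v ⟨hv.choose, hG''sub hv.choose_spec.1, hv.choose_spec.2⟩)
          ⟨f', hf'G'', hf'N, hf'b'⟩
      obtain ⟨t, rfl⟩ : ∃ t, L' = b' :: t := by
        cases L' with
        | nil => simp at hhead'
        | cons x t => simp at hhead'; exact ⟨t, by rw [hhead']⟩
      have hvertG'' : ∀ p ∈ b' :: t, ∃ g' ∈ G'', Inc p g' := by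
        intro p hp
        obtain ⟨e, he, hpe⟩ := hincid' p hp
        rcases he with he | rfl
        · exact ⟨e, hesub' e he, hpe⟩
        · exact ⟨e, hfkG'', hpe⟩
      have hb_notL' : b ∉ b' :: t := fun h => hb_notinc (hvertG'' b h)
      have ha_notL' : a ∉ b' :: t := fun h => ha_notinc (hvertG'' a h)
      have hPE : pathEdges A (b :: a :: b' :: t) = f :: m' :: pathEdges A (b' :: t) := by
        rw [pathEdges_cons₂, pathEdges_cons₂, heq_ba, heq_ab']
      have hfE' : f ∉ pathEdges A (b' :: t) := by
        intro h; have := hesub' f h; simp [hG''def] at this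
      have hm'E' : m' ∉ pathEdges A (b' :: t) := by
        intro h; have := hesub' m' h; simp [hG''def] at this
      have hfkf : fk ≠ f := by intro h; subst h; simp [hG''def] at hfkG''
      have hfkm' : fk ≠ m' := by intro h; subst h; simp [hG''def] at hfkG''
      refine ⟨b :: a :: b' :: t, fk, rfl, ?_, ?_, ?_, ?_, ?_, ?_, ?_, ?_,
        hG''sub hfkG'', hfkN, hfkz, ?_, ?_, ?_, ?_⟩
      · -- Nodup
        refine List.nodup_cons.mpr ⟨?_, List.nodup_cons.mpr ⟨ha_notL', hnodup'⟩⟩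
        intro h
        rcases List.mem_cons.mp h with h | h
        · exact hba h
        · exact hb_notL' h
      · -- z not in L
        intro h
        rcases List.mem_cons.mp h with h | h
        · exact hbz h.symm
        · rcases List.mem_cons.mp h with h | h
          · exact haz h.symm
          · exact hznL' h
      · -- bipartite chain
        exact List.isChain_cons_cons.mpr ⟨hbip_ba, List.isChain_cons_cons.mpr ⟨hbip_ab', hbip'⟩⟩
      · -- alternation chain
        rw [hPE]
        refine List.isChain_cons_cons.mpr ⟨by simp [AltRel, hfnM, hm'M], ?_⟩
        refine List.isChain_cons.mpr ⟨?_, halt'⟩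
        intro y hy
        have := hefirst' y hy
        simp [AltRel, hm'M, this]
      · -- edges nodup
        rw [hPE]
        refine List.nodup_cons.mpr ⟨?_, List.nodup_cons.mpr ⟨hm'E', henodup'⟩⟩
        intro h
        rcases List.mem_cons.mp h with h | h
        · exact hfm' h
        · exact hfE' h
      · -- edges in G
        rw [hPE]
        intro e he
        rcases List.mem_cons.mp he with rfl | he
        · exact hfG
        · rcases List.mem_cons.mp he with rfl | he
          · exact hm'G
          · exact hG''sub (hesub' e he)
      · -- first edge not in M
        rw [hPE]; intro e he; simp at he; exact he ▸ hfnM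
      · -- last edge in M
        rw [hPE]
        cases hE' : pathEdges A (b' :: t) with
        | nil =>
          intro e he; simp at he; exact he ▸ hm'M
        | cons e0 t0 =>
          intro e he
          rw [List.getLast?_cons_cons, List.getLast?_cons_cons] at he
          exact helast' e (by rw [hE']; exact he)
      · -- fk not among path edges
        rw [hPE]
        intro h
        rcases List.mem_cons.mp h with h | h
        · exact hfkf h
        · rcases List.mem_cons.mp h with h | h
          · exact hfkm' h
          · exact hfknE' h
      · -- last vertex data
        refine ⟨w, ?_, hwfk, hcovfk⟩
        rw [List.getLast?_cons_cons, List.getLast?_cons_cons]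
        exact hw
      · -- incidence
        intro p hp
        rw [hPE]
        rcases List.mem_cons.mp hp with rfl | hp
        · exact ⟨f, Or.inl (List.mem_cons_self), hfb⟩
        · rcases List.mem_cons.mp hp with rfl | hp
          · exact ⟨f, Or.inl (List.mem_cons_self), hainc⟩
          · obtain ⟨e, he, hpe⟩ := hincid' p hp
            rcases he with he | rfl
            · exact ⟨e, Or.inl (List.mem_cons_of_mem _ (List.mem_cons_of_mem _ he)), hpe⟩
            · exact ⟨e, Or.inr rfl, hpe⟩
      · -- closed
        intro v e hv heG hince
        rw [hPE]
        by_cases hef : e = f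
        · subst hef; exact Or.inl (List.mem_cons_self)
        · by_cases hem : e = m'
          · subst hem; exact Or.inl (List.mem_cons_of_mem _ (List.mem_cons_self))
          · have heG'' : e ∈ G'' := by simp [hG''def, hef, hem, heG]
            rcases List.mem_cons.mp hv with rfl | hv
            · exact absurd ⟨e, heG'', hince⟩ hb_notinc
            · rcases List.mem_cons.mp hv with rfl | hv
              · exact absurd ⟨e, heG'', hince⟩ ha_notinc
              · rcases hclosed' v e hv heG'' hince with h | h
                · exact Or.inl (List.mem_cons_of_mem _ (List.mem_cons_of_mem _ h))
                · exact Or.inr h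

lemma mem_of_getLast?' {α : Type*} : ∀ {l : List α} {a : α}, l.getLast? = some a → a ∈ l := by
  intro l
  induction l with
  | nil => intro a h; simp at h
  | cons x t ih =>
    intro a h
    cases t with
    | nil => simp at h; simp [h]
    | cons y t' =>
      rw [List.getLast?_cons_cons] at h
      exact List.mem_cons_of_mem _ (ih h)

lemma decompL {d : ℕ} {A B : Finset (Pt d)} {M N : Finset (Pt d × Pt d)}
    (hAB : Disjoint A B) (hM : IsMatching A B M) (hN : IsMatching A B N)
    (hNA : ∀ a ∈ A, ∃ e ∈ N, e.1 = a) (hNB : ∀ b ∈ B, ∃ e ∈ N, e.2 = b)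
    (c0 εu : ℝ)
    (hcyc : ∀ L : List (Pt d), IsAltCycle A B M L → 0 ≤ adjCost c0 εu M (cycleEdges A L)) :
    ∀ (k : ℕ) (G : Finset (Pt d × Pt d)), G.card ≤ k →
    (∀ e ∈ G, e ∈ M ∨ e ∈ N) →
    (∀ e ∈ G, e ∈ M → e ∈ N → False) →
    (∀ v e, (∃ g ∈ G, Inc v g) → SDm M N e → Inc v e → e ∈ G) →
    ∃ Ps : List (List (Pt d)),
      (∀ L ∈ Ps, IsAugPath A B M L) ∧
      ((∃ v, (∃ g ∈ G, Inc v g) ∧ IsFree M v) → Ps ≠ []) ∧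
      (Ps.map (fun L => adjCost c0 εu M (pathEdges A L))).sum ≤ ∑ e ∈ G, Fw c0 εu M e := by
  intro k
  induction k with
  | zero =>
    intro G hk _ _ _
    have : G = ∅ := Finset.card_eq_zero.mp (le_antisymm hk (Nat.zero_le _))
    subst this
    exact ⟨[], by simp, by rintro ⟨v, ⟨g, hg, _⟩, _⟩; simp at hg, by simp⟩
  | succ k ih =>
    intro G hk hG hdisj hInv
    by_cases hGe : G = ∅
    · subst hGe
      exact ⟨[], by simp, by rintro ⟨v, ⟨g, hg, _⟩, _⟩; simp at hg, by simp⟩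
    by_cases hfree : ∃ v, (∃ g ∈ G, Inc v g) ∧ IsFree M v
    · -- extract an augmenting path
      obtain ⟨v, ⟨g0, hg0G, hg0v⟩, hvfree⟩ := hfree
      have hg0N : g0 ∈ N := by
        rcases hG g0 hg0G with h | h
        · exact absurd hg0v ((isFree_iff M v).mp hvfree g0 h)
        · exact h
      obtain ⟨L, hhead, hlen, hnodup, hbip, halt, hlastfree, henodup, hesub, hefirst,
        hincid, hclosed⟩ :=
        pathL hAB hM hN hNA hNB G.card G v le_rfl hG hdisj
          (fun v' e hv' hSD hince => Or.inl (hInv v' e hv' hSD hince))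
          (fun e heM hince heG => ((isFree_iff M v).mp hvfree e heM) hince)
          ⟨g0, hg0G, hg0N, hg0v⟩
      have hmemAB : ∀ p ∈ L, p ∈ A ∪ B := by
        intro p hp
        obtain ⟨e, he, hpe⟩ := hincid p hp
        have heG := hesub e he
        have coords : e.1 ∈ A ∧ e.2 ∈ B := by
          rcases hG e heG with h | h
          · exact hM.1 e h
          · exact hN.1 e h
        rcases hpe with h | h
        · exact Finset.mem_union_left _ (h ▸ coords.1)
        · exact Finset.mem_union_right _ (h ▸ coords.2)
      have hAug : IsAugPath A B M L := by
        refine ⟨⟨hlen, hnodup, hmemAB, hbip, halt⟩, ?_, hlastfree⟩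
        intro p hp
        rw [hhead] at hp
        simp at hp
        exact hp ▸ hvfree
      set C := (pathEdges A L).toFinset with hCdef
      have hCsub : C ⊆ G := by
        intro e he; exact hesub e (List.mem_toFinset.mp he)
      have hCne : C.Nonempty := by
        cases L with
        | nil => simp at hhead
        | cons x t =>
          cases t with
          | nil => simp at hlen
          | cons y t' =>
            exact ⟨edgeOf A x y, by rw [hCdef, pathEdges_cons₂]; simp⟩
      have hss : G \ C ⊂ G := Finset.sdiff_ssubset hCsub hCne
      have hcard' : (G \ C).card ≤ k := by
        have := Finset.card_lt_card hss; omega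
      have hInv' : ∀ v' e, (∃ g ∈ G \ C, Inc v' g) → SDm M N e → Inc v' e → e ∈ G \ C := by
        rintro v' e ⟨g', hg'G', hvg'⟩ hSD hince
        have heG : e ∈ G := hInv v' e ⟨g', Finset.sdiff_subset hg'G', hvg'⟩ hSD hince
        by_cases heC : e ∈ C
        · have hv'L : v' ∈ L :=
            mem_of_inc_pathEdges (List.mem_toFinset.mp heC) hince
          have h1 := hclosed v' g' hv'L (Finset.sdiff_subset hg'G') hvg'
          exact absurd (List.mem_toFinset.mpr h1) (Finset.mem_sdiff.mp hg'G').2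
        · exact Finset.mem_sdiff.mpr ⟨heG, heC⟩
      obtain ⟨Ps', hPs'aug, _, hPs'sum⟩ :=
        ih (G \ C) hcard' (fun e he => hG e (Finset.sdiff_subset he))
          (fun e he => hdisj e (Finset.sdiff_subset he)) hInv'
      refine ⟨L :: Ps', ?_, fun _ => by simp, ?_⟩
      · intro L' hL'
        rcases List.mem_cons.mp hL' with rfl | hL'
        · exact hAug
        · exact hPs'aug L' hL'
      · have hsplit : ∑ e ∈ G \ C, Fw c0 εu M e + ∑ e ∈ C, Fw c0 εu M e
            = ∑ e ∈ G, Fw c0 εu M e := Finset.sum_sdiff hCsub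
        have hadjL : adjCost c0 εu M (pathEdges A L) = ∑ e ∈ C, Fw c0 εu M e :=
          adjCost_eq_finset_sum c0 εu M _ henodup
        simp only [List.map_cons, List.sum_cons]
        linarith
    · -- extract an alternating cycle
      push_neg at hfree
      obtain ⟨e₀, he₀⟩ := Finset.nonempty_iff_ne_empty.mpr hGe
      have hzm : ∃ z m0, m0 ∈ M ∧ m0 ∉ N ∧ m0 ∈ G ∧ Inc z m0 := by
        rcases hG e₀ he₀ with h | h
        · exact ⟨e₀.1, e₀, h, fun hN' => hdisj e₀ he₀ h hN', he₀, Or.inl rfl⟩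
        · have hinc : Inc e₀.1 e₀ := Or.inl rfl
          have hnf := hfree e₀.1 ⟨e₀, he₀, hinc⟩
          rw [isFree_iff] at hnf
          push_neg at hnf
          obtain ⟨m0, hm0M, hm0inc⟩ := hnf
          have hm0nN : m0 ∉ N := by
            intro hm0N
            have h2 : m0 = e₀ := unique_inc hAB hN hm0N h hm0inc hinc
            exact hdisj e₀ he₀ (h2 ▸ hm0M) h
          have hm0G : m0 ∈ G :=
            hInv e₀.1 m0 ⟨e₀, he₀, hinc⟩ ⟨Or.inl hm0M, fun hh => hm0nN hh.2⟩ hm0inc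
          exact ⟨e₀.1, m0, hm0M, hm0nN, hm0G, hm0inc⟩
      obtain ⟨z, m0, hm0M, hm0nN, hm0G, hzm0⟩ := hzm
      have hm0AB := hM.1 m0 hm0M
      obtain ⟨b0, hb0inc, hzb0, hbip_zb0, heq_zb0, heq_b0z, hcov_m0⟩ :=
        other_pt hAB hm0AB.1 hm0AB.2 hzm0
      set G1 := G \ ({m0} : Finset (Pt d × Pt d)) with hG1def
      have hG1sub : G1 ⊆ G := Finset.sdiff_subset
      have hcard1 : G1.card ≤ k := by
        have hss : G1 ⊂ G :=
          Finset.sdiff_ssubset (by simp [hm0G]) ⟨m0, Finset.mem_singleton_self _⟩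
        have := Finset.card_lt_card hss; omega
      have hm0nG1 : m0 ∉ G1 := by simp [hG1def]
      have hb0A : b0 ∈ A ∪ B := by
        rcases hbip_zb0 with ⟨_, h⟩ | ⟨_, h⟩ <;> simp [h]
      have hf0 : ∃ f0, f0 ∈ N ∧ Inc b0 f0 := by
        rcases Finset.mem_union.mp hb0A with h | h
        · obtain ⟨f0, h1, h2⟩ := hNA b0 h; exact ⟨f0, h1, Or.inl h2⟩
        · obtain ⟨f0, h1, h2⟩ := hNB b0 h; exact ⟨f0, h1, Or.inr h2⟩
      obtain ⟨f0, hf0N, hf0b0⟩ := hf0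
      have hf0nM : f0 ∉ M := by
        intro h
        have h2 : f0 = m0 := unique_inc hAB hM h hm0M hf0b0 hb0inc
        exact hm0nN (h2 ▸ hf0N)
      have hf0G : f0 ∈ G :=
        hInv b0 f0 ⟨m0, hm0G, hb0inc⟩ ⟨Or.inr hf0N, fun hh => hf0nM hh.1⟩ hf0b0
      have hf0m0 : f0 ≠ m0 := fun h => hf0nM (h ▸ hm0M)
      have hf0G1 : f0 ∈ G1 := by simp [hG1def, hf0m0, hf0G]
      obtain ⟨Lw, fk, hhead', hnodup', hznLw, hbip', halt', henodup', hesub', hefirst',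
        helast', hfkG1, hfkN, hfkz, hfknE', ⟨w, hwlast, hwfk, hcovfk⟩, hincid', hclosed'⟩ :=
        cycL hAB hM hN hNA hNB k G1 b0 z hcard1
          (fun e he => hG e (hG1sub he))
          (fun e he => hdisj e (hG1sub he))
          (by
            rintro v e ⟨g', hg', hvg'⟩ hSD hince
            have heG : e ∈ G := hInv v e ⟨g', hG1sub hg', hvg'⟩ hSD hince
            by_cases hem : e = m0
            · subst hem
              rcases hcov_m0 v hince with rfl | rfl
              · exact Or.inr ⟨Or.inr rfl, hm0M⟩
              · exact Or.inr ⟨Or.inl rfl, hm0M⟩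
            · exact Or.inl (by simp [hG1def, hem, heG]))
          ⟨m0, hm0M, hm0nN, hb0inc, hm0nG1⟩
          ⟨m0, hm0M, hzm0, hm0nG1⟩
          (Ne.symm hzb0)
          (fun v hv => hfree v ⟨hv.choose, hG1sub hv.choose_spec.1, hv.choose_spec.2⟩)
          ⟨f0, hf0G1, hf0N, hf0b0⟩
      obtain ⟨t, rfl⟩ : ∃ t, Lw = b0 :: t := by
        cases Lw with
        | nil => simp at hhead'
        | cons x t => simp at hhead'; exact ⟨t, by rw [hhead']⟩
      have hwmem : w ∈ b0 :: t := mem_of_getLast?' hwlast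
      have hzw : z ≠ w := fun h => hznLw (h ▸ hwmem)
      have hfkco := hN.1 fk hfkN
      have hfknM : fk ∉ M := fun h => hdisj fk (hG1sub hfkG1) h hfkN
      have hd := Finset.disjoint_left.mp hAB
      have heq_wz : edgeOf A w z = fk := by
        rcases hwfk with h1 | h1
        · have h2 : fk.2 = z := by
            rcases hfkz with h2 | h2
            · exact absurd (h1.symm.trans h2) hzw.symm
            · exact h2
          unfold edgeOf
          rw [if_pos (h1 ▸ hfkco.1)]
          rw [Prod.ext_iff]; exact ⟨h1.symm, h2.symm⟩
        · have h2 : fk.1 = z := by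
            rcases hfkz with h2 | h2
            · exact h2
            · exact absurd (h1.symm.trans h2) hzw.symm
          unfold edgeOf
          rw [if_neg (fun hwA => hd hwA (h1 ▸ hfkco.2))]
          rw [Prod.ext_iff]; exact ⟨h2.symm, h1.symm⟩
      have hbip_wz : (w ∈ A ∧ z ∈ B) ∨ (w ∈ B ∧ z ∈ A) := by
        rcases hwfk with h1 | h1
        · have h2 : fk.2 = z := by
            rcases hfkz with h2 | h2
            · exact absurd (h1.symm.trans h2) hzw.symm
            · exact h2
          exact Or.inl ⟨h1 ▸ hfkco.1, h2 ▸ hfkco.2⟩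
        · have h2 : fk.1 = z := by
            rcases hfkz with h2 | h2
            · exact h2
            · exact absurd (h1.symm.trans h2) hzw.symm
          exact Or.inr ⟨h1 ▸ hfkco.2, h2 ▸ hfkco.1⟩
      have hlen4 : 4 ≤ (z :: b0 :: t).length := by
        rcases t with _ | ⟨a1, _ | ⟨a2, t'⟩⟩
        · exfalso
          have hwb0 : b0 = w := by simpa using hwlast
          subst hwb0
          have hfkm0 : fk = m0 := by
            rcases hfkz with h1 | h1
            · have h2 : fk.2 = b0 := by
                rcases hwfk with h2 | h2
                · exact (hzb0 (h1.symm.trans h2)).elim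
                · exact h2
              have h3 : m0.1 = z := by
                rcases hzm0 with h3 | h3
                · exact h3
                · exact (hd (h1 ▸ hfkco.1) (h3 ▸ hm0AB.2)).elim
              have h4 : m0.2 = b0 := by
                rcases hb0inc with h4 | h4
                · exact (hzb0 (h3.symm.trans h4)).elim
                · exact h4
              rw [Prod.ext_iff]
              exact ⟨h1.trans h3.symm, h2.trans h4.symm⟩
            · have h2 : fk.1 = b0 := by
                rcases hwfk with h2 | h2
                · exact h2
                · exact (hzb0 (h1.symm.trans h2)).elim
              have h3 : m0.2 = z := by
                rcases hzm0 with h3 | h3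
                · exact (hd (h3 ▸ hm0AB.1) (h1 ▸ hfkco.2)).elim
                · exact h3
              have h4 : m0.1 = b0 := by
                rcases hb0inc with h4 | h4
                · exact h4
                · exact (hzb0 (h3.symm.trans h4)).elim
              rw [Prod.ext_iff]
              exact ⟨h2.trans h4.symm, h1.trans h3.symm⟩
          exact hm0nG1 (hfkm0 ▸ hfkG1)
        · exfalso
          have hwa1 : a1 = w := by simpa using hwlast
          have hb0a1 : (b0 ∈ A ∧ w ∈ B) ∨ (b0 ∈ B ∧ w ∈ A) := by
            have h := (List.isChain_cons.mp hbip').1 a1 rfl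
            rw [hwa1] at h
            exact h
          rcases hbip_zb0 with ⟨u1, u2⟩ | ⟨u1, u2⟩ <;>
            rcases hb0a1 with ⟨v1, v2⟩ | ⟨v1, v2⟩ <;>
            rcases hbip_wz with ⟨x1, x2⟩ | ⟨x1, x2⟩ <;>
            first
              | exact hd v1 u2
              | exact hd u1 x2
              | exact hd v2 x1
              | exact hd x2 u1
              | exact hd x1 v2
              | exact hd u2 v1
        · simp only [List.length_cons]
          omega
      obtain ⟨a1, t1, rfl⟩ : ∃ a1 t1, t = a1 :: t1 := by
        cases t with
        | nil => simp only [List.length_cons, List.length_nil] at hlen4; omega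
        | cons a1 t1 => exact ⟨a1, t1, rfl⟩
      set E := pathEdges A (b0 :: a1 :: t1) with hEdef
      have hE0 : E = edgeOf A b0 a1 :: pathEdges A (a1 :: t1) := by
        rw [hEdef, pathEdges_cons₂]
      have hCE : cycleEdges A (z :: b0 :: a1 :: t1) = m0 :: (E ++ [fk]) := by
        unfold cycleEdges
        have h1 : (z :: b0 :: a1 :: t1).take 1 = [z] := rfl
        rw [h1, pathEdges_concat A (z :: b0 :: a1 :: t1) w z
          (by rw [List.getLast?_cons_cons]; exact hwlast), heq_wz, pathEdges_cons₂,
          heq_zb0, List.cons_append]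
      have hm0nE : m0 ∉ E := fun h => hm0nG1 (hesub' m0 h)
      have hm0nfk : m0 ≠ fk := fun h => hm0nG1 (h ▸ hfkG1)
      have hCEnodup : (m0 :: (E ++ [fk])).Nodup := by
        refine List.nodup_cons.mpr ⟨?_, ?_⟩
        · intro h
          rcases List.mem_append.mp h with h | h
          · exact hm0nE h
          · simp at h; exact hm0nfk h
        · exact List.nodup_append'.mpr ⟨henodup', by simp,
            by intro x hx hx'; simp at hx'; exact hfknE' (hx' ▸ hx)⟩
      have hAltC : IsAltCycle A B M (z :: b0 :: a1 :: t1) := by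
        refine ⟨hlen4, List.nodup_cons.mpr ⟨hznLw, hnodup'⟩, ?_, ?_, ?_, ?_⟩
        · intro p hp
          rcases List.mem_cons.mp hp with rfl | hp
          · rcases hbip_zb0 with ⟨h, _⟩ | ⟨h, _⟩ <;> simp [h]
          · obtain ⟨e, he, hpe⟩ := hincid' p hp
            have heG : e ∈ G := by
              rcases he with he | rfl
              · exact hG1sub (hesub' e he)
              · exact hG1sub hfkG1
            have coords : e.1 ∈ A ∧ e.2 ∈ B := by
              rcases hG e heG with h | h
              · exact hM.1 e h
              · exact hN.1 e h
            rcases hpe with h | h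
            · exact Finset.mem_union_left _ (h ▸ coords.1)
            · exact Finset.mem_union_right _ (h ▸ coords.2)
        · have h1 : (z :: b0 :: a1 :: t1).take 1 = [z] := rfl
          rw [h1]
          refine List.isChain_append.mpr
            ⟨List.isChain_cons_cons.mpr ⟨hbip_zb0, hbip'⟩, List.isChain_singleton _, ?_⟩
          intro x hx y hy
          rw [List.getLast?_cons_cons, Option.mem_def, hwlast] at hx
          simp at hx
          simp at hy
          subst hx; subst hy
          exact hbip_wz
        · rw [hCE]
          refine List.isChain_cons.mpr ⟨?_, ?_⟩
          · intro y hy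
            rw [hE0, List.cons_append] at hy
            simp at hy
            subst hy
            have h := hefirst' (edgeOf A b0 a1) (by rw [hE0]; rfl)
            simp [AltRel, hm0M, h]
          · refine List.isChain_append.mpr ⟨halt', List.isChain_singleton _, ?_⟩
            intro x hx y hy
            simp at hy
            subst hy
            have hxM := helast' x (Option.mem_def.mp hx)
            simp [AltRel, hxM, hfknM]
        · intro e f' he hf'
          rw [hCE] at he hf'
          simp at he
          have hlast : (m0 :: (E ++ [fk])).getLast? = some fk := by
            rw [show m0 :: (E ++ [fk]) = (m0 :: E) ++ [fk] from List.cons_append.symm,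
              List.getLast?_concat]
          rw [hlast] at hf'
          simp at hf'
          subst he; subst hf'
          simp [AltRel, hfknM, hm0M]
      have h0le : 0 ≤ ∑ e ∈ (cycleEdges A (z :: b0 :: a1 :: t1)).toFinset, Fw c0 εu M e := by
        rw [← adjCost_eq_finset_sum c0 εu M _ (by rw [hCE]; exact hCEnodup)]
        exact hcyc _ hAltC
      set C := (cycleEdges A (z :: b0 :: a1 :: t1)).toFinset with hCdef
      have hmemC : ∀ e, e ∈ C ↔ (e = m0 ∨ e ∈ E ∨ e = fk) := by
        intro e; rw [hCdef, hCE]; simp; exact or_congr_right or_comm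
      have hCsub : C ⊆ G := by
        intro e he
        rcases (hmemC e).mp he with rfl | he | rfl
        · exact hm0G
        · exact hG1sub (hesub' e he)
        · exact hG1sub hfkG1
      have hCne : C.Nonempty := ⟨m0, (hmemC m0).mpr (Or.inl rfl)⟩
      have hss : G \ C ⊂ G := Finset.sdiff_ssubset hCsub hCne
      have hcard' : (G \ C).card ≤ k := by have := Finset.card_lt_card hss; omega
      have hzonly : ∀ e ∈ G, Inc z e → e ∈ C := by
        intro e heG hince
        rcases hG e heG with h | h
        · have h2 : e = m0 := unique_inc hAB hM h hm0M hince hzm0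
          exact (hmemC e).mpr (Or.inl h2)
        · have h2 : e = fk := unique_inc hAB hN h hfkN hince hfkz
          exact (hmemC e).mpr (Or.inr (Or.inr h2))
      have hLwonly : ∀ v ∈ b0 :: a1 :: t1, ∀ e ∈ G, Inc v e → e ∈ C := by
        intro v hv e heG hince
        by_cases hem : e = m0
        · exact (hmemC e).mpr (Or.inl hem)
        · have heG1 : e ∈ G1 := by simp [hG1def, hem, heG]
          rcases hclosed' v e hv heG1 hince with h | h
          · exact (hmemC e).mpr (Or.inr (Or.inl h))
          · exact (hmemC e).mpr (Or.inr (Or.inr h))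
      have hInv' : ∀ v e, (∃ g ∈ G \ C, Inc v g) → SDm M N e → Inc v e → e ∈ G \ C := by
        rintro v e ⟨g', hg'GC, hvg'⟩ hSD hince
        have hg'G := (Finset.mem_sdiff.mp hg'GC).1
        have hg'nC := (Finset.mem_sdiff.mp hg'GC).2
        have heG : e ∈ G := hInv v e ⟨g', hg'G, hvg'⟩ hSD hince
        refine Finset.mem_sdiff.mpr ⟨heG, ?_⟩
        intro heC
        have hvC : v = z ∨ v ∈ b0 :: a1 :: t1 := by
          rcases (hmemC e).mp heC with rfl | he | rfl
          · rcases hcov_m0 v hince with rfl | rfl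
            · exact Or.inl rfl
            · exact Or.inr (List.mem_cons_self)
          · exact Or.inr (mem_of_inc_pathEdges (hEdef ▸ he) hince)
          · rcases hcovfk v hince with rfl | rfl
            · exact Or.inr hwmem
            · exact Or.inl rfl
        rcases hvC with rfl | hvLw
        · exact hg'nC (hzonly g' hg'G hvg')
        · exact hg'nC (hLwonly v hvLw g' hg'G hvg')
      obtain ⟨Ps', hPs'aug, _, hPs'sum⟩ :=
        ih (G \ C) hcard' (fun e he => hG e (Finset.sdiff_subset he))
          (fun e he => hdisj e (Finset.sdiff_subset he)) hInv'
      refine ⟨Ps', hPs'aug, ?_, ?_⟩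
      · rintro ⟨v, hv, hvfree⟩
        exact absurd hvfree (hfree v hv)
      · have hsplit : ∑ e ∈ G \ C, Fw c0 εu M e + ∑ e ∈ C, Fw c0 εu M e
            = ∑ e ∈ G, Fw c0 εu M e := Finset.sum_sdiff hCsub
        linarith

lemma matchCost_nonneg {d : ℕ} (M : Finset (Pt d × Pt d)) : 0 ≤ matchCost M :=
  Finset.sum_nonneg fun _ _ => dist_nonneg

lemma symmDiff_cost {d : ℕ} (M : Finset (Pt d × Pt d)) (E : List (Pt d × Pt d))
    (hE : E.Nodup) :
    matchCost (symmDiff M E.toFinset) = matchCost M + netCost M E := by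
  set S := E.toFinset with hSdef
  have h1 : symmDiff M S = (M \ S) ∪ (S \ M) := symmDiff_def M S
  have h2 : matchCost (symmDiff M S) = ∑ e ∈ M \ S, dist e.1 e.2 + ∑ e ∈ S \ M, dist e.1 e.2 := by
    rw [matchCost, h1, Finset.sum_union disjoint_sdiff_sdiff]
  have h3 : ∑ e ∈ M \ S, dist e.1 e.2 + ∑ e ∈ M ∩ S, dist e.1 e.2 = matchCost M := by
    rw [matchCost, ← Finset.sdiff_inter_self_left M S]
    exact Finset.sum_sdiff Finset.inter_subset_left
  have h4 : netCost M E = ∑ e ∈ S \ M, dist e.1 e.2 - ∑ e ∈ S ∩ M, dist e.1 e.2 :=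
    netCost_eq_finset M E hE
  have h5 : S ∩ M = M ∩ S := Finset.inter_comm S M
  rw [h2, h4, h5] at *
  linarith

/-- let `0 < ε ≤ 1`, `ε̄ = ε/c1` with `c1 ≥ 8·c0`, and `0 < ε̲ ≤ ε̄`.
If `M` is a matching of size `i < n` with `cost(M) ≤ (1 + ε/2)·cost(Mopt)` and every
alternating cycle `Γ` satisfies `adj_{ε̄,M}(Γ) ≥ 0`, then every augmenting path `Π` with
`adj_{ε̲,M}(Π) ≤ adj*_{ε̄,M}` satisfies
`netcost_M(Π) ≤ (1 + ε/2)·cost(Mopt) − cost(M)`; in particular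
`cost(M ⊕ Π) ≤ (1 + ε/2)·cost(Mopt)`. -/
theorem stmt10 (d n i : ℕ) (hn : 1 ≤ n) (A B : Finset (Pt d)) (hAB : Disjoint A B)
    (hA : A.card = n) (hB : B.card = n)
    (ε c0 c1 εu εl : ℝ) (hε : 0 < ε) (hε1 : ε ≤ 1)
    (hc0 : 0 < c0) (hc1 : 8 * c0 ≤ c1) (hεu : εu = ε / c1)
    (hεl : 0 < εl) (hεlu : εl ≤ εu)
    (M : Finset (Pt d × Pt d)) (hM : IsMatching A B M)
    (hMcard : M.card = i) (hin : i < n)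
    (Mopt : Finset (Pt d × Pt d)) (hMopt : IsMatching A B Mopt) (hMoptcard : Mopt.card = n)
    (hMoptmin : ∀ M'' : Finset (Pt d × Pt d),
      IsMatching A B M'' → M''.card = n → matchCost Mopt ≤ matchCost M'')
    (hMcost : matchCost M ≤ (1 + ε / 2) * matchCost Mopt)
    (hcyc : ∀ L : List (Pt d), IsAltCycle A B M L → 0 ≤ adjCost c0 εu M (cycleEdges A L))
    (astar : ℝ) (hastar : IsLeast (adjSet c0 εu A B M) astar) :
    ∀ L : List (Pt d), IsAugPath A B M L →
      adjCost c0 εl M (pathEdges A L) ≤ astar →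
      netCost M (pathEdges A L) ≤ (1 + ε / 2) * matchCost Mopt - matchCost M ∧
      matchCost (symmDiff M (pathEdges A L).toFinset) ≤ (1 + ε / 2) * matchCost Mopt := by

  have hc1pos : 0 < c1 := by linarith
  have hεupos : 0 < εu := by rw [hεu]; positivity
  have hNA : ∀ a ∈ A, ∃ e ∈ Mopt, e.1 = a := cover_fst hMopt (by omega)
  have hNB : ∀ b ∈ B, ∃ e ∈ Mopt, e.2 = b := cover_snd hMopt (by omega)
  -- the symmetric difference graph
  set G0 := (M ∪ Mopt) \ (M ∩ Mopt) with hG0def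
  have hG0mem : ∀ e, e ∈ G0 ↔ ((e ∈ M ∨ e ∈ Mopt) ∧ ¬(e ∈ M ∧ e ∈ Mopt)) := by
    intro e
    simp [hG0def, Finset.mem_sdiff, Finset.mem_union, Finset.mem_inter]
  have hG0G : ∀ e ∈ G0, e ∈ M ∨ e ∈ Mopt := fun e he => ((hG0mem e).mp he).1
  have hdisj0 : ∀ e ∈ G0, e ∈ M → e ∈ Mopt → False :=
    fun e he h1 h2 => ((hG0mem e).mp he).2 ⟨h1, h2⟩
  have hInv0 : ∀ v e, (∃ g ∈ G0, Inc v g) → SDm M Mopt e → Inc v e → e ∈ G0 :=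
    fun v e _ hSD _ => (hG0mem e).mpr hSD
  obtain ⟨Ps, hPsaug, hPsne, hPssum⟩ :=
    decompL hAB hM hMopt hNA hNB c0 εu hcyc G0.card G0 le_rfl hG0G hdisj0 hInv0
  -- a free vertex exists, so `Ps` is nonempty
  have hPsne' : Ps ≠ [] := by
    apply hPsne
    have himg : (M.image Prod.snd).card < B.card := by
      calc (M.image Prod.snd).card ≤ M.card := Finset.card_image_le
        _ < B.card := by omega
    obtain ⟨b, hbB, hbimg⟩ : ∃ b ∈ B, b ∉ M.image Prod.snd := by
      by_contra h
      push_neg at h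
      exact absurd (Finset.card_le_card h) (by omega)
    have hbfree : IsFree M b := by
      intro e heM
      constructor
      · intro h
        exact Finset.disjoint_left.mp hAB (h ▸ (hM.1 e heM).1) hbB
      · intro h
        exact hbimg (Finset.mem_image.mpr ⟨e, heM, h⟩)
    obtain ⟨f, hfMopt, hf2⟩ := hNB b hbB
    have hfnM : f ∉ M := by
      intro h
      exact ((isFree_iff M b).mp hbfree f h) (Or.inr hf2)
    have hfG0 : f ∈ G0 := (hG0mem f).mpr ⟨Or.inr hfMopt, fun hh => hfnM hh.1⟩
    exact ⟨b, ⟨f, hfG0, Or.inr hf2⟩, hbfree⟩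
  -- evaluate the total weight of `G0`
  have hMns : 0 ≤ matchCost Mopt := matchCost_nonneg Mopt
  have hMn : 0 ≤ matchCost M := matchCost_nonneg M
  have hinter : 0 ≤ ∑ e ∈ M ∩ Mopt, dist e.1 e.2 :=
    Finset.sum_nonneg fun _ _ => dist_nonneg
  have hsum1 : ∑ e ∈ G0, (if e ∈ M then -(dist e.1 e.2) else dist e.1 e.2)
      = matchCost Mopt - matchCost M := by
    rw [← Finset.sum_filter_add_sum_filter_not G0 (· ∈ M)]
    have hfil1 : G0.filter (· ∈ M) = M \ Mopt := by
      ext e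
      simp only [Finset.mem_filter, Finset.mem_sdiff]
      rw [hG0mem e]
      tauto
    have hfil2 : G0.filter (¬ · ∈ M) = Mopt \ M := by
      ext e
      simp only [Finset.mem_filter, Finset.mem_sdiff]
      rw [hG0mem e]
      tauto
    have e1 : ∑ e ∈ G0.filter (· ∈ M), (if e ∈ M then -(dist e.1 e.2) else dist e.1 e.2)
        = -∑ e ∈ M \ Mopt, dist e.1 e.2 := by
      rw [hfil1, ← Finset.sum_neg_distrib]
      apply Finset.sum_congr rfl
      intro e he
      rw [if_pos (Finset.mem_sdiff.mp he).1]
    have e2 : ∑ e ∈ G0.filter (¬ · ∈ M), (if e ∈ M then -(dist e.1 e.2) else dist e.1 e.2)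
        = ∑ e ∈ Mopt \ M, dist e.1 e.2 := by
      rw [hfil2]
      apply Finset.sum_congr rfl
      intro e he
      rw [if_neg (Finset.mem_sdiff.mp he).2]
    have e3 : ∑ e ∈ M \ Mopt, dist e.1 e.2 + ∑ e ∈ M ∩ Mopt, dist e.1 e.2 = matchCost M := by
      rw [matchCost, ← Finset.sdiff_inter_self_left M Mopt]
      exact Finset.sum_sdiff Finset.inter_subset_left
    have e4 : ∑ e ∈ Mopt \ M, dist e.1 e.2 + ∑ e ∈ M ∩ Mopt, dist e.1 e.2
        = matchCost Mopt := by
      rw [matchCost, Finset.inter_comm M Mopt, ← Finset.sdiff_inter_self_left Mopt M]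
      exact Finset.sum_sdiff Finset.inter_subset_left
    rw [e1, e2]
    linarith
  have hsum2 : ∑ e ∈ G0, dist e.1 e.2 ≤ matchCost M + matchCost Mopt := by
    have hsub : G0 ⊆ M ∪ Mopt := by rw [hG0def]; exact Finset.sdiff_subset
    have h1 : ∑ e ∈ G0, dist e.1 e.2 ≤ ∑ e ∈ M ∪ Mopt, dist e.1 e.2 :=
      Finset.sum_le_sum_of_subset_of_nonneg hsub fun _ _ _ => dist_nonneg
    have h2 : ∑ e ∈ M ∪ Mopt, dist e.1 e.2 + ∑ e ∈ M ∩ Mopt, dist e.1 e.2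
        = matchCost M + matchCost Mopt := Finset.sum_union_inter
    unfold matchCost at *
    linarith
  have hFsum : ∑ e ∈ G0, Fw c0 εu M e
      ≤ matchCost Mopt - matchCost M + c0 * εu * (matchCost M + matchCost Mopt) := by
    unfold Fw
    rw [Finset.sum_add_distrib, ← Finset.mul_sum]
    have : c0 * εu * ∑ e ∈ G0, dist e.1 e.2 ≤ c0 * εu * (matchCost M + matchCost Mopt) := by
      apply mul_le_mul_of_nonneg_left hsum2 (by positivity)
    linarith
  -- the arithmetic bound
  have hbound : matchCost Mopt - matchCost M + c0 * εu * (matchCost M + matchCost Mopt)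
      ≤ (1 + ε / 2) * matchCost Mopt - matchCost M := by
    have h8 : c0 * εu ≤ ε / 8 := by
      rw [hεu, show c0 * (ε / c1) = c0 * ε / c1 by ring,
        div_le_div_iff₀ hc1pos (by norm_num : (0:ℝ) < 8)]
      nlinarith
    have hMM : matchCost M + matchCost Mopt ≤ (5 / 2) * matchCost Mopt := by nlinarith
    have hpos : 0 ≤ c0 * εu := by positivity
    nlinarith
  have hBd : 0 ≤ (1 + ε / 2) * matchCost Mopt - matchCost M := by linarith
  -- pick a path of small adjusted cost
  set Bd := (1 + ε / 2) * matchCost Mopt - matchCost M with hBddef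
  have hastarBd : astar ≤ Bd := by
    have hmapne : Ps.map (fun L => adjCost c0 εu M (pathEdges A L)) ≠ [] := by
      intro h
      exact hPsne' (List.map_eq_nil_iff.mp h)
    obtain ⟨x, hx, hxle⟩ := exists_le_of_sum_le (c := max (∑ e ∈ G0, Fw c0 εu M e) 0)
      (le_max_right _ _) _ hmapne (le_trans hPssum (le_max_left _ _))
    obtain ⟨L₀, hL₀, rfl⟩ := List.mem_map.mp hx
    have h1 : astar ≤ adjCost c0 εu M (pathEdges A L₀) :=
      hastar.2 ⟨L₀, hPsaug L₀ hL₀, rfl⟩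
    have h2 : max (∑ e ∈ G0, Fw c0 εu M e) 0 ≤ Bd := by
      apply max_le _ hBd
      linarith
    linarith
  intro L hL hadj
  have hnet : netCost M (pathEdges A L) ≤ Bd := by
    have h1 : netCost M (pathEdges A L) ≤ adjCost c0 εl M (pathEdges A L) :=
      netCost_le_adjCost (by positivity) M _
    linarith
  refine ⟨hnet, ?_⟩
  have hEnodup : (pathEdges A L).Nodup := pathEdges_nodup hL.1.2.1
  rw [symmDiff_cost M (pathEdges A L) hEnodup]
  rw [hBddef] at hnet
  linarith
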